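/- Let n ≥ 2 be an integer, μ ∈ ℝ, σ > 0 and δ > 0, and let X_1, …, X_n be independent random variables each with the Gaussian distribution N(μ, σ²). Define the sample variance S² = (1/(n−1)) ∑_{i=1}^n (X_i − X̄)² with X̄ = (1/n)∑_{i=1}^n X_i. Then P( S² > (1+δ) σ² ) ≤ ( e^{−δ} (1+δ) )^{(n−1)/2}. -/

import Mathlib

open MeasureTheory ProbabilityTheory Real
open scoped NNReal ENNReal

lemma lint_gauss (α B c : ℝ) (hα : 0 < α) (hB : 0 ≤ B) :
    ∫⁻ x : ℝ, ENNReal.ofReal (Real.exp (-α * x^2 - B*(c+x)^2))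
      = ENNReal.ofReal (Real.sqrt (π/(α+B)) * Real.exp (-(α*B/(α+B)) * c^2)) := by
  have hαB : 0 < α + B := by linarith
  set m := B*c/(α+B) with hm
  have key : ∀ x : ℝ, -α * x^2 - B*(c+x)^2
      = -(α+B) * (x + m)^2 + (-(α*B/(α+B)) * c^2) := by
    intro x
    rw [hm]
    field_simp
    ring
  have h1 : ∀ x : ℝ, ENNReal.ofReal (Real.exp (-α * x^2 - B*(c+x)^2))
      = ENNReal.ofReal (Real.exp (-(α+B) * (x + m)^2)) * ENNReal.ofReal (Real.exp (-(α*B/(α+B)) * c^2)) := by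
    intro x
    rw [key x, Real.exp_add, ENNReal.ofReal_mul (Real.exp_nonneg _)]
  simp_rw [h1]
  rw [lintegral_mul_const' _ _ ENNReal.ofReal_ne_top]
  have hint : Integrable (fun x : ℝ => Real.exp (-(α+B) * (x + m)^2)) := by
    exact (integrable_exp_neg_mul_sq hαB).comp_add_right m
  rw [← ofReal_integral_eq_lintegral_ofReal hint (Filter.Eventually.of_forall fun x => (Real.exp_nonneg _))]
  rw [show (∫ x : ℝ, Real.exp (-(α+B) * (x + m)^2)) = ∫ x : ℝ, Real.exp (-(α+B) * x^2) from
    integral_add_right_eq_self (fun x => Real.exp (-(α+B) * x^2)) m]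
  rw [integral_gaussian, ← ENNReal.ofReal_mul (Real.sqrt_nonneg _)]

lemma lint_gauss' (t B c : ℝ) (ht : t < 1/2) (hB : 0 ≤ B) :
    ∫⁻ x : ℝ, ENNReal.ofReal (Real.exp (t*x^2 - B*(c+x)^2)) ∂(gaussianReal 0 1)
      = ENNReal.ofReal ((Real.sqrt (2*((1/2 - t) + B)))⁻¹
          * Real.exp (-((1/2-t)*B/((1/2-t)+B)) * c^2)) := by
  set α : ℝ := 1/2 - t with hα'
  have hα : 0 < α := by simp [hα']; linarith
  have hmf : Measurable fun x : ℝ => ENNReal.ofReal (Real.exp (t*x^2 - B*(c+x)^2)) := by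
    exact ENNReal.measurable_ofReal.comp (by fun_prop)
  rw [gaussianReal_of_var_ne_zero 0 one_ne_zero,
    lintegral_withDensity_eq_lintegral_mul volume (measurable_gaussianPDF 0 1) hmf]
  have hpt : ∀ x : ℝ, (gaussianPDF 0 1 x) * ENNReal.ofReal (Real.exp (t*x^2 - B*(c+x)^2))
      = ENNReal.ofReal ((Real.sqrt (2*π))⁻¹) * ENNReal.ofReal (Real.exp (-α * x^2 - B*(c+x)^2)) := by
    intro x
    simp only [gaussianPDF, gaussianPDFReal]
    have h1 : ((1:ℝ≥0):ℝ) = 1 := rfl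
    rw [h1]
    rw [ENNReal.ofReal_mul (by positivity), mul_assoc, ← ENNReal.ofReal_mul (Real.exp_nonneg _),
      ← Real.exp_add]
    norm_num
    congr 2
    rw [hα']
    ring
  simp only [Pi.mul_apply]
  simp_rw [hpt]
  rw [lintegral_const_mul' _ _ ENNReal.ofReal_ne_top, lint_gauss α B c hα hB,
    ← ENNReal.ofReal_mul (by positivity), ← mul_assoc]
  congr 2
  have hab : 0 < α + B := by linarith
  have : (Real.sqrt (2*π))⁻¹ * Real.sqrt (π/(α+B)) = Real.sqrt ((2*π)⁻¹ * (π/(α+B))) := by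
    rw [← Real.sqrt_inv, ← Real.sqrt_mul (by positivity)]
  rw [this, show (2*π)⁻¹ * (π/(α+B)) = (2*(α+B))⁻¹ by field_simp, Real.sqrt_inv]

lemma lintegral_pi_succ {k : ℕ} (μ : Measure ℝ) [IsProbabilityMeasure μ]
    (f : (Fin (k+1) → ℝ) → ℝ≥0∞) (hf : Measurable f) :
    ∫⁻ z, f z ∂(Measure.pi fun _ : Fin (k+1) => μ)
      = ∫⁻ x, ∫⁻ y, f (Fin.cons x y) ∂(Measure.pi fun _ : Fin k => μ) ∂μ := by
  have MP := (measurePreserving_piFinSuccAbove (fun _ : Fin (k+1) => μ) 0).symm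
  rw [← MP.lintegral_comp hf, lintegral_prod (fun p => f ((MeasurableEquiv.piFinSuccAbove (fun _ => ℝ) 0).symm p)) (hf.comp (MeasurableEquiv.measurable _)).aemeasurable]
  congr 1
  ext x
  congr 1
  ext y
  congr 1
  simp [MeasurableEquiv.piFinSuccAbove, Fin.insertNthEquiv, Fin.insertNth_zero]


set_option maxHeartbeats 1000000 in
lemma lint_pi (t : ℝ) (ht : 0 < t) (ht2 : t < 1/2) (k : ℕ) :
    ∀ (B c : ℝ), 0 ≤ B →
    ∫⁻ z : Fin k → ℝ, ENNReal.ofReal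
        (Real.exp (t * ∑ i, z i ^ 2 - B * (c + ∑ i, z i) ^ 2))
        ∂(Measure.pi fun _ => gaussianReal 0 1)
      = ENNReal.ofReal (Real.sqrt (((2*(1/2-t))^k)⁻¹ * ((1/2-t)/((1/2-t)+k*B)))
          * Real.exp (-((1/2-t)*B/((1/2-t)+k*B)) * c^2)) := by
  have ha : 0 < 1/2 - t := by linarith
  set a : ℝ := 1/2 - t with ha'
  induction k with
  | zero =>
      intro B c hB
      simp only [Finset.univ_eq_empty, Finset.sum_empty, pow_zero, inv_one,
        Nat.cast_zero, zero_mul, add_zero, div_self ha.ne', Real.sqrt_one, one_mul,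
        mul_zero, mul_div_assoc]
      rw [lintegral_const, measure_univ, mul_one]
      congr 3
      field_simp
      ring
  | succ k IH =>
      intro B c hB
      have hak : (0:ℝ) < a + k*B := by positivity
      set B' : ℝ := a*B/(a+k*B) with hB'
      have hB'0 : 0 ≤ B' := by positivity
      have hmf : Measurable fun z : Fin (k+1) → ℝ => ENNReal.ofReal
          (Real.exp (t * ∑ i, z i ^ 2 - B * (c + ∑ i, z i) ^ 2)) :=
        ENNReal.measurable_ofReal.comp (by fun_prop)
      rw [lintegral_pi_succ _ _ hmf]
      have inner : ∀ x : ℝ, (∫⁻ y : Fin k → ℝ, ENNReal.ofReal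
            (Real.exp (t * ∑ i, Fin.cons x y i ^ 2 - B * (c + ∑ i, Fin.cons x y i) ^ 2))
            ∂(Measure.pi fun _ => gaussianReal 0 1))
          = ENNReal.ofReal (Real.sqrt (((2*a)^k)⁻¹ * (a/(a+k*B)))) *
            ENNReal.ofReal (Real.exp (t * x^2 - B' * (c + x)^2)) := by
        intro x
        have hpt : ∀ y : Fin k → ℝ, ENNReal.ofReal
            (Real.exp (t * ∑ i, Fin.cons x y i ^ 2 - B * (c + ∑ i, Fin.cons x y i) ^ 2))
            = ENNReal.ofReal (Real.exp (t * x^2)) *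
            ENNReal.ofReal (Real.exp (t * ∑ i, y i ^ 2 - B * ((c+x) + ∑ i, y i) ^ 2)) := by
          intro y
          rw [← ENNReal.ofReal_mul (Real.exp_nonneg _), ← Real.exp_add]
          simp only [Fin.sum_univ_succ, Fin.cons_zero, Fin.cons_succ]
          congr 2
          ring
        simp_rw [hpt]
        rw [lintegral_const_mul' _ _ ENNReal.ofReal_ne_top, IH B (c+x) hB,
          ← ENNReal.ofReal_mul (Real.exp_nonneg _), mul_comm (Real.exp _),
          mul_assoc, ← ENNReal.ofReal_mul (Real.sqrt_nonneg _), ← Real.exp_add]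
        congr 3
        rw [hB']
        ring
      simp_rw [inner]
      rw [lintegral_const_mul' _ _ ENNReal.ofReal_ne_top, lint_gauss' t B' c ht2 hB'0,
        ← ENNReal.ofReal_mul (Real.sqrt_nonneg _)]
      have h1 : (1:ℝ)/2 - t = a := rfl
      rw [h1]
      have hsum : a + B' = a * (a + (k+1)*B) / (a + k*B) := by
        rw [hB']; field_simp; ring
      have hden : (0:ℝ) < a + (k+1)*B := by positivity
      have e2 : a * B' / (a + B') = a * B / (a + (k+1)*B) := by
        rw [hB', hsum]
        field_simp
      have e3 : Real.sqrt (((2*a)^k)⁻¹ * (a/(a+k*B))) * (Real.sqrt (2*(a+B')))⁻¹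
          = Real.sqrt (((2*a)^(k+1))⁻¹ * (a/(a+(k+1)*B))) := by
        rw [← Real.sqrt_inv, ← Real.sqrt_mul (by positivity)]
        congr 1
        rw [hsum]
        field_simp
        ring
      rw [← mul_assoc, e3, e2]
      norm_num

lemma map_fun_pi {Ω : Type*} [MeasurableSpace Ω] (P : Measure Ω) [IsProbabilityMeasure P]
    {n : ℕ} (Y : Fin n → Ω → ℝ) (hm : ∀ i, Measurable (Y i))
    (hindep : iIndepFun Y P)
    (hlaw : ∀ i, Measure.map (Y i) P = gaussianReal 0 1) :
    Measure.map (fun ω i => Y i ω) P = Measure.pi (fun _ : Fin n => gaussianReal 0 1) := by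
  refine (Measure.pi_eq fun s hs => ?_).symm
  rw [Measure.map_apply (measurable_pi_iff.mpr hm) (MeasurableSet.univ_pi hs)]
  have hpre : (fun ω i => Y i ω) ⁻¹' Set.pi Set.univ s = ⋂ i ∈ Finset.univ, Y i ⁻¹' s i := by
    ext ω
    simp [Set.mem_pi]
  rw [hpre, hindep.measure_inter_preimage_eq_mul Finset.univ (fun i _ => hs i)]
  refine Finset.prod_congr rfl fun i _ => ?_
  rw [← hlaw i, Measure.map_apply (hm i) (hs i)]

theorem sample_variance_tail {Ω : Type*} [MeasurableSpace Ω] (P : Measure Ω)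
    [IsProbabilityMeasure P] (n : ℕ) (hn : 2 ≤ n) (μ σ δ : ℝ) (hσ : 0 < σ) (hδ : 0 < δ)
    (X : Fin n → Ω → ℝ) (hXm : ∀ i, Measurable (X i))
    (hindep : iIndepFun X P)
    (hlaw : ∀ i, Measure.map (X i) P = gaussianReal μ ⟨σ ^ 2, sq_nonneg σ⟩) :
    P {ω | (1 + δ) * σ ^ 2 <
          (∑ i : Fin n, (X i ω - (∑ j : Fin n, X j ω) / n) ^ 2) / ((n : ℝ) - 1)}
      ≤ ENNReal.ofReal ((Real.exp (-δ) * (1 + δ)) ^ (((n : ℝ) - 1) / 2)) := by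
  have hδ1 : (0:ℝ) < 1 + δ := by linarith
  set t : ℝ := δ / (2 * (1 + δ)) with htdef
  have ht : 0 < t := by positivity
  have ht2 : t < 1/2 := by
    rw [htdef, div_lt_iff₀ (by positivity)]
    ring_nf
    nlinarith
  have hn1 : (1:ℝ) ≤ (n:ℝ) - 1 := by
    have : (2:ℝ) ≤ (n:ℝ) := by exact_mod_cast hn
    linarith
  have hm0 : (0:ℝ) < (n:ℝ) - 1 := by linarith
  have hσ2 : (0:ℝ) < σ ^ 2 := by positivity
  have hnR : (0:ℝ) < (n:ℝ) := by linarith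
  set m : ℝ := (n:ℝ) - 1 with hmdef
  -- standardized variables
  set Y : Fin n → Ω → ℝ := fun i => (fun x => σ⁻¹ * (x + -μ)) ∘ X i with hYdef
  have hYm : ∀ i, Measurable (Y i) := fun i => (((hXm i).add_const _).const_mul _)
  have hYindep : iIndepFun Y P :=
    hindep.comp _ (fun i => (measurable_id.add_const _).const_mul _)
  have hYlaw : ∀ i, Measure.map (Y i) P = gaussianReal 0 1 := by
    intro i
    have h1 : Y i = (fun x => σ⁻¹ * x) ∘ ((fun x => x + -μ) ∘ X i) := rfl
    rw [h1, ← Measure.map_map (show Measurable fun x : ℝ => σ⁻¹ * x by fun_prop)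
        ((show Measurable fun x : ℝ => x + -μ by fun_prop).comp (hXm i)),
      ← Measure.map_map (show Measurable fun x : ℝ => x + -μ by fun_prop) (hXm i), hlaw i]
    erw [gaussianReal_map_add_const, gaussianReal_map_const_mul]
    norm_num
    congr 1
    ext
    push_cast
    change (σ ^ 2)⁻¹ * σ ^ 2 = 1
    field_simp
  -- pointwise identities
  have hXY : ∀ i ω, X i ω = σ * Y i ω + μ := by
    intro i ω
    simp only [hYdef, Function.comp_apply]
    field_simp
    ring
  set f : Ω → ℝ := fun ω => ∑ i, (Y i ω - (∑ j, Y j ω) / n) ^ 2 with hfdef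
  have hf : Measurable f := by
    apply Finset.measurable_sum
    intro i _
    exact (((hYm i).sub ((Finset.measurable_sum _ fun j _ => hYm j).div_const _)).pow_const 2)
  have hQ : ∀ ω, ∑ i : Fin n, (X i ω - (∑ j : Fin n, X j ω) / n) ^ 2 = σ^2 * f ω := by
    intro ω
    have hs : (∑ j, X j ω) = σ * (∑ j, Y j ω) + n * μ := by
      simp only [hXY, Finset.sum_add_distrib, Finset.mul_sum, Finset.sum_const,
        Finset.card_univ, Fintype.card_fin, nsmul_eq_mul]
    rw [hfdef, Finset.mul_sum]
    refine Finset.sum_congr rfl fun i _ => ?_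
    rw [hXY i ω, hs]
    field_simp
    ring
  -- event rewriting
  have hev : {ω | (1 + δ) * σ ^ 2 <
          (∑ i : Fin n, (X i ω - (∑ j : Fin n, X j ω) / n) ^ 2) / ((n : ℝ) - 1)}
      = {ω | (1 + δ) * m < f ω} := by
    ext ω
    simp only [Set.mem_setOf_eq, hQ ω, ← hmdef]
    rw [lt_div_iff₀ hm0]
    constructor
    · intro h
      nlinarith
    · intro h
      nlinarith
  rw [hev]
  -- Markov
  set ε : ℝ≥0∞ := ENNReal.ofReal (Real.exp (t * ((1+δ) * m))) with hεdef
  have hε0 : ε ≠ 0 := by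
    simp [hεdef, Real.exp_pos]
  have hεtop : ε ≠ ⊤ := ENNReal.ofReal_ne_top
  set g : Ω → ℝ≥0∞ := fun ω => ENNReal.ofReal (Real.exp (t * f ω)) with hgdef
  have hgm : Measurable g := ENNReal.measurable_ofReal.comp ((hf.const_mul t).exp)
  have hsubset : {ω | (1 + δ) * m < f ω} ⊆ {ω | ε ≤ g ω} := by
    intro ω hω
    simp only [Set.mem_setOf_eq] at hω ⊢
    exact ENNReal.ofReal_le_ofReal (Real.exp_le_exp.mpr
      (mul_le_mul_of_nonneg_left hω.le ht.le))
  have markov := mul_meas_ge_le_lintegral₀ (μ := P) hgm.aemeasurable ε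
  have h1 : P {ω | (1 + δ) * m < f ω} ≤ ε⁻¹ * ∫⁻ ω, g ω ∂P := by
    calc P {ω | (1 + δ) * m < f ω} ≤ P {ω | ε ≤ g ω} := measure_mono hsubset
    _ = ε⁻¹ * (ε * P {ω | ε ≤ g ω}) := by
        rw [← mul_assoc, ENNReal.inv_mul_cancel hε0 hεtop, one_mul]
    _ ≤ ε⁻¹ * ∫⁻ ω, g ω ∂P := mul_le_mul_right markov _
  refine h1.trans ?_
  -- compute the MGF
  have hmap := map_fun_pi P Y hYm hYindep hYlaw
  set gp : (Fin n → ℝ) → ℝ≥0∞ := fun z => ENNReal.ofReal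
    (Real.exp (t * ∑ i, z i ^ 2 - (t/n) * ((0:ℝ) + ∑ i, z i) ^ 2)) with hgpdef
  have hgpm : Measurable gp := ENNReal.measurable_ofReal.comp (by fun_prop)
  have hcomp : ∀ ω, g ω = gp (fun i => Y i ω) := by
    intro ω
    simp only [hgdef, hgpdef, hfdef]
    congr 1
    have expand : ∑ i, (Y i ω - (∑ j, Y j ω) / n) ^ 2
        = ∑ i, Y i ω ^ 2 - (∑ i, Y i ω)^2 / n := by
      have : ∀ i : Fin n, (Y i ω - (∑ j, Y j ω) / n) ^ 2
          = Y i ω ^ 2 - 2 * ((∑ j, Y j ω) / n) * Y i ω + ((∑ j, Y j ω) / n)^2 := by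
        intro i; ring
      rw [Finset.sum_congr rfl fun i _ => this i]
      rw [Finset.sum_add_distrib, Finset.sum_sub_distrib, ← Finset.mul_sum,
        Finset.sum_const, Finset.card_univ, Fintype.card_fin, nsmul_eq_mul]
      field_simp
      ring
    rw [expand]
    field_simp
    ring
  have hL : ∫⁻ ω, g ω ∂P = ∫⁻ z, gp z ∂(Measure.pi fun _ : Fin n => gaussianReal 0 1) := by
    rw [← hmap, lintegral_map hgpm (measurable_pi_iff.mpr hYm)]
    simp_rw [hcomp]
    rfl
  rw [hL, hgpdef, lint_pi t ht ht2 n (t/n) 0 (by positivity)]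
  -- final arithmetic
  have ha : (0:ℝ) < 1/2 - t := by linarith
  have h2a : 2 * (1/2 - t) = (1+δ)⁻¹ := by
    rw [htdef]
    field_simp
    ring
  have hat : (1/2 - t) + (n:ℝ) * (t / n) = 1/2 := by
    field_simp
    ring
  have hval : Real.sqrt (((2*(1/2-t))^n)⁻¹ * ((1/2-t)/((1/2-t)+n*(t/n))))
      * Real.exp (-((1/2-t)*(t/n)/((1/2-t)+n*(t/n))) * (0:ℝ)^2)
      = Real.sqrt ((1+δ)^(n-1)) := by
    rw [hat, show ((0:ℝ)^2) = 0 by norm_num, mul_zero, Real.exp_zero, mul_one]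
    congr 1
    rw [show ((1:ℝ)/2 - t) / (1/2) = 2 * (1/2 - t) by ring, h2a,
      show (((1+δ)⁻¹:ℝ)^n)⁻¹ * (1+δ)⁻¹ = (1+δ)^n * ((1+δ)^1)⁻¹ by
        rw [pow_one]; field_simp; rw [← mul_pow, one_div_mul_cancel hδ1.ne', one_pow],
      ← pow_sub₀ _ (ne_of_gt hδ1) (by omega : 1 ≤ n)]
  rw [hval, hεdef, ← ENNReal.ofReal_inv_of_pos (Real.exp_pos _), ← Real.exp_neg,
    ← ENNReal.ofReal_mul (Real.exp_nonneg _)]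
  refine ENNReal.ofReal_le_ofReal (le_of_eq ?_)
  have hδm : t * ((1+δ) * m) = δ * (m/2) := by
    rw [htdef]
    field_simp
  have hcast : ((n - 1 : ℕ) : ℝ) = m := by
    rw [hmdef]
    push_cast [Nat.cast_sub (by omega : 1 ≤ n)]
    ring
  rw [hδm, Real.mul_rpow (Real.exp_nonneg _) hδ1.le, ← Real.exp_mul,
    show -δ * (m/2) = -(δ * (m/2)) by ring]
  congr 1
  rw [Real.sqrt_eq_rpow, ← Real.rpow_natCast (1+δ) (n-1), ← Real.rpow_mul hδ1.le, hcast]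
  ring_nf
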